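/- Conversely, if N(t) = ∑_{n≥0} t^n/x_n! (positive coefficients, N(0)=1) is such that the polynomials q_n defined by N(t)^η = ∑ q_n(η) t^n/x_n! satisfy q_n(η) > 0 for all η ∈ (0,1] and n ≥ 1, then log N(t) = ∑_{n≥1} (q_n'(0)/x_n!) t^n, with q_n'(0) ≥ 0 for all n and q_1'(0) = 1. In particular log N has all nonnegative coefficients. -/

import Mathlib

open PowerSeries Finset

/-- Formal exponential of a power series (intended for series with zero constant term):
coefficientwise `exp F = ∑_k F^k / k!`, which is a finite sum in each coefficient. -/
noncomputable def expS (F : PowerSeries ℝ) : PowerSeries ℝ :=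
  PowerSeries.mk fun n => ∑ k ∈ Finset.range (n + 1),
    (1 / (k.factorial : ℝ)) * PowerSeries.coeff n (F ^ k)

/-- Formal logarithm of a power series (intended for series with constant term 1):
coefficientwise `log N = ∑_{k≥1} (-1)^{k+1} (N-1)^k / k`. -/
noncomputable def logS (N : PowerSeries ℝ) : PowerSeries ℝ :=
  PowerSeries.mk fun n => ∑ k ∈ Finset.range (n + 1),
    ((-1 : ℝ) ^ (k + 1) / (k : ℝ)) * PowerSeries.coeff n ((N - 1) ^ k)

/-- The formal power `N^η := exp (η · log N)`. -/
noncomputable def powS (N : PowerSeries ℝ) (η : ℝ) : PowerSeries ℝ :=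
  expS (η • logS N)

/-- Deformed factorial `x_n! = x_1 x_2 ⋯ x_n`, with `x_0! = 1`. -/
noncomputable def xfac (x : ℕ → ℝ) (n : ℕ) : ℝ := ∏ k ∈ Finset.Icc 1 n, x k

theorem stmt7 (x : ℕ → ℝ) (hx : ∀ n, 1 ≤ n → 0 < x n)
    (N : PowerSeries ℝ) (hN : N = PowerSeries.mk fun n => 1 / xfac x n)
    (q : ℕ → ℝ → ℝ)
    (hq : ∀ n η, q n η = xfac x n * PowerSeries.coeff n (powS N η))
    (hpos : ∀ η ∈ Set.Ioc (0 : ℝ) 1, ∀ n, 1 ≤ n → 0 < q n η) :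
    logS N = (PowerSeries.mk fun n => deriv (q n) 0 / xfac x n) ∧
    (∀ n : ℕ, 0 ≤ deriv (q n) 0) ∧
    deriv (q 1) 0 = 1 := by
  set L := logS N with hL
  have hxfac_pos : ∀ n, 0 < xfac x n := by
    intro n
    exact Finset.prod_pos fun k hk => hx k (Finset.mem_Icc.mp hk).1
  have h0L : PowerSeries.coeff 0 L = 0 := by
    simp [hL, logS, PowerSeries.coeff_mk]
  -- explicit polynomial form of q n
  have hqform : ∀ n η, q n η =
      ∑ k ∈ Finset.range (n+1),
        (xfac x n * PowerSeries.coeff n (L ^ k) / k.factorial) * η ^ k := by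
    intro n η
    rw [hq]
    unfold powS expS
    rw [PowerSeries.coeff_mk, Finset.mul_sum]
    refine Finset.sum_congr rfl fun k hk => ?_
    rw [smul_pow, map_smul, smul_eq_mul]
    ring
  -- derivative of q n at 0
  have hderiv : ∀ n, HasDerivAt (q n) (xfac x n * PowerSeries.coeff n L) 0 := by
    intro n
    have key : HasDerivAt
        (fun η => ∑ k ∈ Finset.range (n+1),
          (xfac x n * PowerSeries.coeff n (L ^ k) / k.factorial) * η ^ k)
        (∑ k ∈ Finset.range (n+1),
          (xfac x n * PowerSeries.coeff n (L ^ k) / k.factorial) * (k * 0 ^ (k-1))) 0 :=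
      HasDerivAt.fun_sum fun k _ =>
        (hasDerivAt_pow k 0).const_mul (xfac x n * PowerSeries.coeff n (L ^ k) / k.factorial)
    have hfun : q n = fun η => ∑ k ∈ Finset.range (n+1),
        (xfac x n * PowerSeries.coeff n (L ^ k) / k.factorial) * η ^ k :=
      funext fun η => hqform n η
    rw [hfun]
    convert key using 1
    rcases Nat.eq_zero_or_pos n with hn | hn
    · subst hn
      simp [h0L]
    · rw [Finset.sum_eq_single_of_mem 1 (Finset.mem_range.mpr (by omega))]
      · simp
      · intro b _ hb
        rcases Nat.eq_zero_or_pos b with hb0 | hb0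
        · subst hb0; simp
        · have : b - 1 ≠ 0 := by omega
          simp [zero_pow this]
  have hderiv_eq : ∀ n, deriv (q n) 0 = xfac x n * PowerSeries.coeff n L :=
    fun n => (hderiv n).deriv
  have hnonneg : ∀ n, 0 ≤ deriv (q n) 0 := by
    intro n
    rcases Nat.eq_zero_or_pos n with hn | hn
    · subst hn
      rw [hderiv_eq, h0L, mul_zero]
    · have hq0 : q n 0 = 0 := by
        rw [hqform]
        rw [Finset.sum_eq_single_of_mem 0 (Finset.mem_range.mpr (by omega))]
        · simp [PowerSeries.coeff_one, Nat.pos_iff_ne_zero.mp hn]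
        · intro b _ hb
          simp [zero_pow hb]
      have hslope : Filter.Tendsto (slope (q n) 0) (nhdsWithin 0 {(0:ℝ)}ᶜ)
          (nhds (xfac x n * PowerSeries.coeff n L)) :=
        hasDerivAt_iff_tendsto_slope.mp (hderiv n)
      have hmono : nhdsWithin (0:ℝ) (Set.Ioi 0) ≤ nhdsWithin 0 {(0:ℝ)}ᶜ :=
        nhdsWithin_mono 0 (fun y hy => ne_of_gt hy)
      have htend := hslope.mono_left hmono
      rw [hderiv_eq]
      refine ge_of_tendsto htend ?_
      have h1 : ∀ᶠ η in nhdsWithin (0:ℝ) (Set.Ioi 0), η < 1 :=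
        Filter.Eventually.filter_mono nhdsWithin_le_nhds
          (eventually_lt_nhds (by norm_num : (0:ℝ) < 1))
      filter_upwards [self_mem_nhdsWithin, h1] with η hη hη1
      have hqpos := hpos η ⟨hη, le_of_lt hη1⟩ n hn
      have : slope (q n) 0 η = q n η / η := by
        simp [slope_def_field, hq0]
      rw [this]
      exact le_of_lt (div_pos hqpos hη)
  refine ⟨?_, hnonneg, ?_⟩
  · ext n
    rw [PowerSeries.coeff_mk, hderiv_eq n, mul_div_cancel_left₀ _ (ne_of_gt (hxfac_pos n))]
  · rw [hderiv_eq]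
    have hx1 : xfac x 1 = x 1 := by simp [xfac]
    have hc1 : PowerSeries.coeff 1 L = 1 / x 1 := by
      rw [hL]
      unfold logS
      rw [PowerSeries.coeff_mk]
      rw [show Finset.range 2 = {0, 1} from rfl]
      rw [Finset.sum_insert (by simp), Finset.sum_singleton]
      have hcN : PowerSeries.coeff 1 N = 1 / x 1 := by
        rw [hN, PowerSeries.coeff_mk, hx1]
      have : PowerSeries.coeff 1 ((N - 1) ^ 1) = 1 / x 1 := by
        rw [pow_one, map_sub, hcN, PowerSeries.coeff_one]
        simp
      simp [this, hcN]
    rw [hx1, hc1, mul_one_div, div_self (ne_of_gt (hx 1 le_rfl))]
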